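/- For every integer ℓ ≥ 2 with binary power representation L = (n_1, …, n_k), the securities of the almost complete tree F(ℓ) and of T_L coincide: R(F(ℓ)) = R(T_L) = 2ℓ − n_1 − k − 1. -/

import Mathlib

/-- Proper binary trees: every internal vertex has exactly two children. -/
inductive BTree : Type
  | leaf : BTree
  | node : BTree → BTree → BTree
  deriving DecidableEq

namespace BTree

/-- The rank (protection number) of the root of a proper binary tree:
the minimum distance from the root to a leaf descendant. -/
def rank : BTree → ℕ
  | leaf => 0
  | node l r => min l.rank r.rank + 1

/-- The security of a proper binary tree: the sum of the ranks of all vertices. -/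
def security : BTree → ℕ
  | leaf => 0
  | node l r => (node l r).rank + l.security + r.security

/-- The number of leaves. -/
def leafCount : BTree → ℕ
  | leaf => 1
  | node l r => l.leafCount + r.leafCount

/-- The height: maximum distance from the root to a leaf. -/
def height : BTree → ℕ
  | leaf => 0
  | node l r => max l.height r.height + 1

/-- A tree is complete if all leaves are at the same depth. -/
def IsComplete : BTree → Prop
  | leaf => True
  | node l r => IsComplete l ∧ IsComplete r ∧ l.height = r.height

/-- The subtree at a given position (a list of directions from the root;
`false` = first child, `true` = second child), if the position exists. -/
def subtreeAt : BTree → List Bool → Option BTree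
  | t, [] => some t
  | leaf, _ :: _ => none
  | node l _, false :: p => subtreeAt l p
  | node _ r, true :: p => subtreeAt r p

/-- Replace the subtree at a given position by `s`. -/
def replaceAt : BTree → List Bool → BTree → BTree
  | _, [], s => s
  | leaf, _ :: _, _ => leaf
  | node l r, false :: p, s => node (replaceAt l p s) r
  | node l r, true :: p, s => node l (replaceAt r p s)

/-- The rank of the vertex at position `p` in `T` (rank of a vertex only depends
on the subtree consisting of the vertex and its descendants). -/
def rankAt (T : BTree) (p : List Bool) : ℕ := ((T.subtreeAt p).map rank).getD 0

/-- The vertex at position `p` in `T` is saturated: its subtree is complete, but the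
subtree of none of its (proper) ancestors is complete. -/
def Saturated (T : BTree) (p : List Bool) : Prop :=
  (∃ s, T.subtreeAt p = some s ∧ IsComplete s) ∧
  ∀ q s, q <+: p → q ≠ p → T.subtreeAt q = some s → ¬ IsComplete s

/-- The complete binary tree of height `m` (with `2 ^ m` leaves). -/
def completeTree : ℕ → BTree
  | 0 => leaf
  | m + 1 => node (completeTree m) (completeTree m)

/-- The tree `T_L` for `L = (n₁, …, n_k)`: a binary caterpillar whose spine vertices carry
complete binary trees with `2 ^ nᵢ` leaves. -/
def TL : List ℕ → BTree
  | [] => leaf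
  | n :: ns => ns.foldl (fun acc m => node acc (completeTree m)) (completeTree n)

/-- Helper for the almost complete tree: a complete binary tree of height `m`
whose leftmost `r` leaves each receive two leaf children. -/
def buildF : ℕ → ℕ → BTree
  | 0, r => if r = 0 then leaf else node leaf leaf
  | m + 1, r => node (buildF m (min r (2 ^ m))) (buildF m (r - 2 ^ m))

/-- The almost complete ("good") tree `F(ℓ)` on `ℓ` leaves. -/
def F (ℓ : ℕ) : BTree := buildF (Nat.log 2 ℓ) (ℓ - 2 ^ Nat.log 2 ℓ)

end BTree

open BTree

/-- popcount -/
def pc : ℕ → ℕ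
  | 0 => 0
  | n+1 => pc ((n+1)/2) + (n+1) % 2
decreasing_by exact Nat.div_lt_self (Nat.succ_pos _) one_lt_two

lemma pc_zero : pc 0 = 0 := by simp [pc]

lemma pc_div2 (n : ℕ) : pc n = pc (n / 2) + n % 2 := by
  cases n with
  | zero => simp [pc]
  | succ k => rw [pc]

lemma pc_one : pc 1 = 1 := by rw [pc_div2, pc_zero]

lemma pc_pow (m : ℕ) : pc (2 ^ m) = 1 := by
  induction m with
  | zero => exact pc_one
  | succ k ih =>
    rw [pc_div2]
    have h1 : 2 ^ (k+1) / 2 = 2 ^ k := by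
      rw [pow_succ]; exact Nat.mul_div_cancel _ (by norm_num)
    have h2 : 2 ^ (k+1) % 2 = 0 := by
      rw [pow_succ]; exact Nat.mul_mod_left _ _
    rw [h1, h2, ih]

lemma pc_add_pow : ∀ m r, r < 2 ^ m → pc (2 ^ m + r) = pc r + 1 := by
  intro m
  induction m with
  | zero =>
    intro r hr
    interval_cases r
    simp [pc_one, pc_zero]
  | succ k ih =>
    intro r hr
    have hdiv : (2 ^ (k+1) + r) / 2 = 2 ^ k + r / 2 := by
      have : 2 ^ (k+1) + r = r + 2 * 2 ^ k := by ring
      rw [this, Nat.add_mul_div_left _ _ (by norm_num : 0 < 2)]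
      omega
    have hmod : (2 ^ (k+1) + r) % 2 = r % 2 := by
      have : 2 ^ (k+1) + r = r + 2 ^ k * 2 := by ring
      rw [this, Nat.add_mul_mod_self_right]
    have hr2 : r / 2 < 2 ^ k := by
      rw [pow_succ] at hr; omega
    rw [pc_div2, hdiv, hmod, ih _ hr2, pc_div2 r]
    ring

lemma rank_complete (m : ℕ) : (completeTree m).rank = m := by
  induction m with
  | zero => rfl
  | succ k ih => simp [completeTree, rank, ih]

lemma sec_complete (m : ℕ) : (completeTree m).security + m + 2 = 2 ^ (m+1) := by
  induction m with
  | zero => rfl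
  | succ k ih =>
    have hr := rank_complete (k+1)
    have : (completeTree (k+1)).security
        = (completeTree (k+1)).rank + (completeTree k).security
          + (completeTree k).security := rfl
    rw [this, hr]
    have hp : 2 ^ (k+2) = 2 * 2 ^ (k+1) := by ring
    omega

lemma rank_buildF : ∀ m r, r ≤ 2 ^ m →
    (buildF m r).rank = if r = 2 ^ m then m + 1 else m := by
  intro m
  induction m with
  | zero =>
    intro r hr
    interval_cases r <;> simp [buildF, rank]
  | succ k ih =>
    intro r hr
    have h1 : (1:ℕ) ≤ 2 ^ k := Nat.one_le_two_pow
    have hdef : buildF (k+1) r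
        = BTree.node (buildF k (min r (2 ^ k))) (buildF k (r - 2 ^ k)) := rfl
    by_cases hc : r ≤ 2 ^ k
    · have hmin : min r (2 ^ k) = r := by omega
      have hsub : r - 2 ^ k = 0 := by omega
      rw [hdef, hmin, hsub]
      have i1 := ih r hc
      have i2 := ih 0 (by omega)
      simp only [rank, i1, i2]
      have hne0 : (0:ℕ) ≠ 2 ^ k := by omega
      have hne : r ≠ 2 ^ (k+1) := by rw [pow_succ]; omega
      rw [if_neg hne0, if_neg hne]
      by_cases he : r = 2 ^ k <;> simp [he] <;> omega
    · have hmin : min r (2 ^ k) = 2 ^ k := by omega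
      have hpow : 2 ^ (k+1) = 2 * 2 ^ k := by ring
      have hr2 : r - 2 ^ k ≤ 2 ^ k := by omega
      have i1 : (buildF k (2 ^ k)).rank = k + 1 := by simpa using ih (2 ^ k) le_rfl
      have i2 := ih (r - 2 ^ k) hr2
      rw [hdef]
      simp only [rank, hmin, i1]
      by_cases he : r = 2 ^ (k+1)
      · have h2 : r - 2 ^ k = 2 ^ k := by omega
        rw [h2, i1, if_pos he]; omega
      · have h2 : r - 2 ^ k ≠ 2 ^ k := by omega
        rw [if_neg h2] at i2
        rw [i2, if_neg he]; omega

lemma sec_buildF : ∀ m r, r ≤ 2 ^ m →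
    (buildF m r).security + pc r + m + 2 = 2 ^ (m+1) + 2 * r := by
  intro m
  induction m with
  | zero =>
    intro r hr
    interval_cases r <;> simp [buildF, security, rank, pc_zero, pc_one]
  | succ k ih =>
    intro r hr
    have h1 : (1:ℕ) ≤ 2 ^ k := Nat.one_le_two_pow
    have hpow : 2 ^ (k+1) = 2 * 2 ^ k := by ring
    have hpow2 : 2 ^ (k+2) = 2 * 2 ^ (k+1) := by ring
    have hsec : (buildF (k+1) r).security
        = (buildF (k+1) r).rank + (buildF k (min r (2 ^ k))).security
          + (buildF k (r - 2 ^ k)).security := rfl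
    have hrank := rank_buildF (k+1) r hr
    by_cases hc : r ≤ 2 ^ k
    · have hmin : min r (2 ^ k) = r := by omega
      have hsub : r - 2 ^ k = 0 := by omega
      have i1 := ih r hc
      have i2 := ih 0 (by omega)
      have hne : r ≠ 2 ^ (k+1) := by omega
      rw [if_neg hne] at hrank
      have hpc0 : pc 0 = 0 := pc_zero
      rw [hsec, hmin, hsub, hrank]
      omega
    · have hmin : min r (2 ^ k) = 2 ^ k := by omega
      set r' := r - 2 ^ k with hr'
      have i1 := ih (2 ^ k) le_rfl
      have i2 := ih r' (by omega)
      have hpcpow := pc_pow k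
      by_cases he : r = 2 ^ (k+1)
      · rw [if_pos he] at hrank
        have hpc : pc r = 1 := by rw [he, pc_pow]
        have hr'e : r' = 2 ^ k := by omega
        rw [hsec, hmin, hrank, hpc, hr'e]
        omega
      · rw [if_neg he] at hrank
        have hr'lt : r' < 2 ^ k := by omega
        have hpc : pc r = pc r' + 1 := by
          have : r = 2 ^ k + r' := by omega
          rw [this, pc_add_pow k r' hr'lt]
        rw [hsec, hmin, hrank, hpc]
        omega

lemma sum_lt_pow : ∀ (L : List ℕ), L.Pairwise (· > ·) → ∀ n, (∀ a ∈ L, a < n) →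
    (L.map (2 ^ ·)).sum < 2 ^ n := by
  intro L
  induction L with
  | nil => intro _ n _; simpa using Nat.pos_pow_of_pos n (by norm_num)
  | cons a tl ih =>
    intro hpw n hb
    have hpw' := List.Pairwise.of_cons hpw
    have htl : ∀ x ∈ tl, x < a := fun x hx =>
      (List.pairwise_cons.mp hpw).1 x hx
    have h1 := ih hpw' a htl
    have ha : a < n := hb a (by simp)
    have h2 : 2 ^ (a+1) ≤ 2 ^ n := Nat.pow_le_pow_right (by norm_num) (by omega)
    have h3 : 2 ^ (a+1) = 2 * 2 ^ a := by ring
    simp only [List.map_cons, List.sum_cons]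
    omega

lemma pc_sum : ∀ (L : List ℕ), L.Pairwise (· > ·) →
    pc ((L.map (2 ^ ·)).sum) = L.length := by
  intro L
  induction L with
  | nil => simpa using pc_zero
  | cons a tl ih =>
    intro hpw
    have htl : ∀ x ∈ tl, x < a := fun x hx =>
      (List.pairwise_cons.mp hpw).1 x hx
    have hlt := sum_lt_pow tl (List.Pairwise.of_cons hpw) a htl
    simp only [List.map_cons, List.sum_cons]
    rw [pc_add_pow a _ hlt, ih (List.Pairwise.of_cons hpw)]
    simp

lemma sec_foldl : ∀ (ns : List ℕ) (T : BTree), List.Chain (· > ·) T.rank ns →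
    (ns.foldl (fun acc m => BTree.node acc (completeTree m)) T).security
      = T.security + (ns.map (fun m => m + 1 + (completeTree m).security)).sum := by
  intro ns
  induction ns with
  | nil => intro T _; simp
  | cons m ms ih =>
    intro T hch
    simp only [List.Chain, List.isChain_cons_cons] at hch
    obtain ⟨hlt, hch'⟩ := hch
    have hrk : (BTree.node T (completeTree m)).rank = m + 1 := by
      simp only [rank, rank_complete]
      omega
    have hch2 : List.Chain (· > ·) (BTree.node T (completeTree m)).rank ms := by
      rw [hrk]
      cases ms with
      | nil => exact List.Chain.nil
      | cons b bs =>
        simp only [List.Chain, List.isChain_cons_cons] at hch' ⊢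
        exact ⟨by omega, hch'.2⟩
    have hsec : (BTree.node T (completeTree m)).security
        = (BTree.node T (completeTree m)).rank + T.security
          + (completeTree m).security := rfl
    simp only [List.foldl_cons, List.map_cons, List.sum_cons]
    rw [ih _ hch2, hsec, hrk]
    ring

lemma sum_sec_list : ∀ (L : List ℕ),
    (L.map (fun m => m + 1 + (completeTree m).security)).sum + L.length
      = 2 * (L.map (2 ^ ·)).sum := by
  intro L
  induction L with
  | nil => simp
  | cons a tl ih =>
    have := sec_complete a
    have hp : 2 ^ (a+1) = 2 * 2 ^ a := by ring
    simp only [List.map_cons, List.sum_cons, List.length_cons]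
    omega

open BTree in
/-- For every `ℓ ≥ 2` with binary power representation `L = (n₁, …, n_k)`, the securities
of the almost complete tree `F(ℓ)` and of `T_L` coincide, and both equal `2ℓ − n₁ − k − 1`. -/
theorem security_F_eq_security_TL (ℓ n1 : ℕ) (L' : List ℕ) (hℓ : 2 ≤ ℓ)
    (hdec : (n1 :: L').Chain' (· > ·))
    (hsum : ((n1 :: L').map (2 ^ ·)).sum = ℓ) :
    (F ℓ).security = (TL (n1 :: L')).security ∧
      (F ℓ).security + n1 + (n1 :: L').length + 1 = 2 * ℓ := by
  have hpw : (n1 :: L').Pairwise (· > ·) := List.isChain_iff_pairwise.mp hdec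
  have hpw' : L'.Pairwise (· > ·) := List.Pairwise.of_cons hpw
  have htl : ∀ x ∈ L', x < n1 := fun x hx => (List.pairwise_cons.mp hpw).1 x hx
  set s := (L'.map (2 ^ ·)).sum with hs
  have hsum' : 2 ^ n1 + s = ℓ := by
    simpa using hsum
  have hslt : s < 2 ^ n1 := sum_lt_pow L' hpw' n1 htl
  have hpow : 2 ^ (n1+1) = 2 * 2 ^ n1 := by ring
  have hlog : Nat.log 2 ℓ = n1 :=
    Nat.log_eq_of_pow_le_of_lt_pow (by omega) (by omega)
  -- security of F ℓ
  have hF : F ℓ = buildF n1 s := by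
    rw [F, hlog]
    congr 1
    omega
  have hsecF := sec_buildF n1 s (by omega)
  have hpcs : pc s = L'.length := pc_sum L' hpw'
  -- security of TL
  have hchain : List.Chain (· > ·) (completeTree n1).rank L' := by
    rw [rank_complete]
    exact hdec
  have hTL : (TL (n1 :: L')).security
      = (completeTree n1).security
        + (L'.map (fun m => m + 1 + (completeTree m).security)).sum := by
    rw [TL]
    exact sec_foldl L' (completeTree n1) hchain
  have hsumsec := sum_sec_list L'
  have hsecC := sec_complete n1
  have hlen : (n1 :: L').length = L'.length + 1 := rfl
  rw [hF, hTL, hlen]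
  omega
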